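/- Let G_w be a weighted graph containing two pendant vertices u and v that have the same (unique) neighbor, i.e., u and v form a pendant twin. Then i_+(G_w) = i_+(G_w − v) = i_+(G_w − u) and i_-(G_w) = i_-(G_w − v) = i_-(G_w − u), where G_w − v denotes the weighted graph induced on the vertices other than v. -/

import Mathlib

open Matrix

/-- The positive inertia index of a matrix: the number of positive eigenvalues
(counted with multiplicity) if the matrix is Hermitian, and `0` otherwise. -/
noncomputable def posInertia {k 𝕜 : Type*} [RCLike 𝕜] [Fintype k] [DecidableEq k]
    (A : Matrix k k 𝕜) : ℕ :=
  if h : A.IsHermitian then Fintype.card {i // 0 < h.eigenvalues i} else 0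

/-- The negative inertia index of a matrix. -/
noncomputable def negInertia {k 𝕜 : Type*} [RCLike 𝕜] [Fintype k] [DecidableEq k]
    (A : Matrix k k 𝕜) : ℕ :=
  if h : A.IsHermitian then Fintype.card {i // h.eigenvalues i < 0} else 0

/-- The nullity of a matrix: the number of zero eigenvalues. -/
noncomputable def nulInertia {k 𝕜 : Type*} [RCLike 𝕜] [Fintype k] [DecidableEq k]
    (A : Matrix k k 𝕜) : ℕ :=
  if h : A.IsHermitian then Fintype.card {i // h.eigenvalues i = 0} else 0

/-- A weighted graph: a simple graph together with a symmetric weight function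
which is positive on all edges. -/
structure WeightedGraph (V : Type*) where
  G : SimpleGraph V
  w : V → V → ℝ
  symm : ∀ u v : V, w u v = w v u
  pos : ∀ u v : V, G.Adj u v → 0 < w u v

open Classical in
/-- The (weighted) adjacency matrix of a weighted graph. -/
noncomputable def WeightedGraph.adjMatrix {V : Type*} [Fintype V] [DecidableEq V]
    (W : WeightedGraph V) : Matrix V V ℝ :=
  fun a b => if W.G.Adj a b then W.w a b else 0

/-- `i₊`, the number of positive eigenvalues of the adjacency matrix. -/
noncomputable def WeightedGraph.iPos {V : Type*} [Fintype V] [DecidableEq V]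
    (W : WeightedGraph V) : ℕ := posInertia W.adjMatrix

/-- `i₋`, the number of negative eigenvalues of the adjacency matrix. -/
noncomputable def WeightedGraph.iNeg {V : Type*} [Fintype V] [DecidableEq V]
    (W : WeightedGraph V) : ℕ := negInertia W.adjMatrix

/-- `i₀`, the number of zero eigenvalues of the adjacency matrix. -/
noncomputable def WeightedGraph.iNul {V : Type*} [Fintype V] [DecidableEq V]
    (W : WeightedGraph V) : ℕ := nulInertia W.adjMatrix

/-- A weighted graph is bicyclic if its underlying graph is connected and has
exactly one more edge than vertices. -/
def WeightedGraph.IsBicyclic {V : Type*} [Fintype V] (W : WeightedGraph V) : Prop :=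
  W.G.Connected ∧ W.G.edgeSet.ncard = Fintype.card V + 1

/-- The graph has a pendant vertex (a vertex of degree one). -/
def WeightedGraph.HasPendant {V : Type*} (W : WeightedGraph V) : Prop :=
  ∃ x : V, (W.G.neighborSet x).ncard = 1

/-- The graph has no pendant vertices. -/
def WeightedGraph.NoPendant {V : Type*} (W : WeightedGraph V) : Prop :=
  ∀ x : V, (W.G.neighborSet x).ncard ≠ 1

/-- The base of `G` is (isomorphic to) `H`: some induced subgraph of `G` is
isomorphic to `H`.  (For a bicyclic graph `G` and a bicyclic graph `H` without
pendant vertices this induced subgraph is necessarily the unique base of `G`.) -/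
def BaseIsoTo {V B : Type*} (G : SimpleGraph V) (H : SimpleGraph B) : Prop :=
  ∃ S : Set V, Nonempty ((G.induce S) ≃g H)

/-- Vertex labels of the connecting path of `∞(p,l,q)`: the path starts at the
vertex `0` of the first cycle `0, 1, …, p-1`, and its further vertices are
`p, p+1, …`. -/
def pathVert (p j : ℕ) : ℕ := if j = 0 then 0 else p - 1 + j

/-- Vertex labels of the second cycle of `∞(p,l,q)`: it starts at the last
vertex of the connecting path and continues with `p+l-1, p+l, …`. -/
def infCyc2Vert (p l k : ℕ) : ℕ := if k = 0 then pathVert p (l - 1) else p + l - 2 + k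

/-- The edge relation of `∞(p,l,q)` on the vertex labels `0, …, p+q+l-3`:
the first cycle on `0, …, p-1`, the connecting path (on `l` vertices) from the
vertex `0`, and the second cycle attached at the last path vertex. -/
def infinityRel (p l q a b : ℕ) : Prop :=
  (a + 1 < p ∧ b = a + 1) ∨ (a = 0 ∧ b = p - 1) ∨
  (∃ j, j + 1 < l ∧ a = pathVert p j ∧ b = pathVert p (j + 1)) ∨
  (∃ k, k + 1 < q ∧ a = infCyc2Vert p l k ∧ b = infCyc2Vert p l (k + 1)) ∨
  (a = infCyc2Vert p l 0 ∧ b = infCyc2Vert p l (q - 1))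

/-- The graph `∞(p,l,q)`: two vertex-disjoint cycles of lengths `p` and `q`
joined by a path on `l` vertices (whose endpoints are identified with one
vertex on each cycle).  It has `p + q + l - 2` vertices. -/
def infinityGraph (p l q : ℕ) : SimpleGraph (Fin (p + q + l - 2)) :=
  SimpleGraph.fromRel (fun a b => infinityRel p l q a.1 b.1)

/-- The edge relation of one of the three `u,v`-paths of `θ(p,l,q)` having `m`
internal vertices, the internal vertices being labelled `o, o+1, …, o+m-1`
(`u` is the vertex `0` and `v` is the vertex `1`). -/
def thetaPathRel (m o a b : ℕ) : Prop :=
  if m = 0 then a = 0 ∧ b = 1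
  else (a = 0 ∧ b = o) ∨ (∃ i, i + 1 < m ∧ a = o + i ∧ b = o + i + 1) ∨ (a = o + m - 1 ∧ b = 1)

/-- The graph `θ(p,l,q)`: two vertices `u = 0` and `v = 1` joined by three
internally disjoint paths with `p`, `l`, `q` internal vertices respectively.
It has `p + l + q + 2` vertices. -/
def thetaGraph (p l q : ℕ) : SimpleGraph (Fin (p + l + q + 2)) :=
  SimpleGraph.fromRel (fun a b =>
    thetaPathRel p 2 a.1 b.1 ∨ thetaPathRel l (p + 2) a.1 b.1 ∨
      thetaPathRel q (p + l + 2) a.1 b.1)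

/-- The edge set of `G` is exactly the (symmetrized) list `E`. -/
def adjSpec {V : Type*} (G : SimpleGraph V) (E : List (V × V)) : Prop :=
  ∀ a b : V, G.Adj a b ↔ ((a, b) ∈ E ∨ (b, a) ∈ E)

/-- The weighted subgraph induced on a set `S` of vertices. -/
def WeightedGraph.induce {V : Type*} (W : WeightedGraph V) (S : Set V) : WeightedGraph S where
  G := W.G.induce S
  w := fun a b => W.w a b
  symm := fun a b => W.symm a b
  pos := fun a b h => W.pos a b h

/-- The `k`-th vertex (mod `n`) of a cycle on `Fin n`. -/
def cycVert (n : ℕ) (hn : 0 < n) (k : ℕ) : Fin n := ⟨k % n, Nat.mod_lt _ hn⟩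

/-- `W` is the weighted graph `θ(1,1,1)` (i.e. `K_{2,3}`) with parts `{u, v}`
and `{x1, x2, x3}`. -/
def Theta111Shape {V : Type*} (W : WeightedGraph V) (u v x1 x2 x3 : V) : Prop :=
  [u, v, x1, x2, x3].Nodup ∧ (∀ z : V, z ∈ [u, v, x1, x2, x3]) ∧
    adjSpec W.G [(u, x1), (u, x2), (u, x3), (x1, v), (x2, v), (x3, v)]

/-- `W` is the weighted graph `θ(1,0,1)` on vertices `u, v, x1, x2` with edges
`uv, ux1, x1v, ux2, x2v`. -/
def Theta101Shape {V : Type*} (W : WeightedGraph V) (u v x1 x2 : V) : Prop :=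
  [u, v, x1, x2].Nodup ∧ (∀ z : V, z ∈ [u, v, x1, x2]) ∧
    adjSpec W.G [(u, v), (u, x1), (x1, v), (u, x2), (x2, v)]

/-- `W` is the weighted graph `θ(1,0,2)` on vertices `u, v, x, y, z` with edges
`uv, ux, xv, uy, yz, zv`. -/
def Theta102Shape {V : Type*} (W : WeightedGraph V) (u v x y z : V) : Prop :=
  [u, v, x, y, z].Nodup ∧ (∀ t : V, t ∈ [u, v, x, y, z]) ∧
    adjSpec W.G [(u, v), (u, x), (x, v), (u, y), (y, z), (z, v)]

/-- `W` is the weighted graph `θ(2,0,2)` on vertices `u, v, x1, x2, y1, y2`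
with edges `uv, ux1, x1x2, x2v, uy1, y1y2, y2v`. -/
def Theta202Shape {V : Type*} (W : WeightedGraph V) (u v x1 x2 y1 y2 : V) : Prop :=
  [u, v, x1, x2, y1, y2].Nodup ∧ (∀ t : V, t ∈ [u, v, x1, x2, y1, y2]) ∧
    adjSpec W.G [(u, v), (u, x1), (x1, x2), (x2, v), (u, y1), (y1, y2), (y2, v)]

/-- `W` is the weighted graph `θ(1,1,2)` on vertices `u, v, x1, x2, y1, y2`
with edges `ux1, x1v, ux2, x2v, uy1, y1y2, y2v`. -/
def Theta112Shape {V : Type*} (W : WeightedGraph V) (u v x1 x2 y1 y2 : V) : Prop :=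
  [u, v, x1, x2, y1, y2].Nodup ∧ (∀ t : V, t ∈ [u, v, x1, x2, y1, y2]) ∧
    adjSpec W.G [(u, x1), (x1, v), (u, x2), (x2, v), (u, y1), (y1, y2), (y2, v)]

/-- `W` is the weighted graph `∞(3,1,3)`: two triangles sharing the vertex `c`. -/
def Inf313Shape {V : Type*} (W : WeightedGraph V) (c a1 a2 b1 b2 : V) : Prop :=
  [c, a1, a2, b1, b2].Nodup ∧ (∀ t : V, t ∈ [c, a1, a2, b1, b2]) ∧
    adjSpec W.G [(c, a1), (a1, a2), (a2, c), (c, b1), (b1, b2), (b2, c)]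

/-- `W` is the weighted graph `∞(3,2,3)`: the triangle `u,x,y` and the triangle
`v,s,t`, joined by the edge `uv`. -/
def Inf323Shape {V : Type*} (W : WeightedGraph V) (u v x y s t : V) : Prop :=
  [u, v, x, y, s, t].Nodup ∧ (∀ z : V, z ∈ [u, v, x, y, s, t]) ∧
    adjSpec W.G [(u, x), (x, y), (y, u), (v, s), (s, t), (t, v), (u, v)]

/-- `W` is the weighted graph `∞(3,1,4)`: the triangle `c,x,y` and the
quadrilateral `c,z1,z2,z3` sharing the vertex `c`. -/
def Inf314Shape {V : Type*} (W : WeightedGraph V) (c x y z1 z2 z3 : V) : Prop :=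
  [c, x, y, z1, z2, z3].Nodup ∧ (∀ t : V, t ∈ [c, x, y, z1, z2, z3]) ∧
    adjSpec W.G [(c, x), (x, y), (y, c), (c, z1), (z1, z2), (z2, z3), (z3, c)]

/-- `W` is the weighted graph `∞(4,1,4)`: the quadrilaterals `c,x1,x2,x3` and
`c,y1,y2,y3` sharing the vertex `c`. -/
def Inf414Shape {V : Type*} (W : WeightedGraph V) (c x1 x2 x3 y1 y2 y3 : V) : Prop :=
  [c, x1, x2, x3, y1, y2, y3].Nodup ∧ (∀ t : V, t ∈ [c, x1, x2, x3, y1, y2, y3]) ∧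
    adjSpec W.G [(c, x1), (x1, x2), (x2, x3), (x3, c), (c, y1), (y1, y2), (y2, y3), (y3, c)]

/-! ### Auxiliary machinery: Sylvester-style inertia invariance -/

section InertiaAux

open Matrix

private lemma mulVec_sum' {n ι : Type*} [Fintype n] (s : Finset ι) (A : Matrix n n ℝ)
    (w : ι → n → ℝ) : A *ᵥ (∑ i ∈ s, w i) = ∑ i ∈ s, A *ᵥ w i := by
  exact map_sum (Matrix.mulVecLin A) w s

private lemma dotProduct_sum' {n ι : Type*} [Fintype n] (s : Finset ι) (x : n → ℝ)
    (w : ι → n → ℝ) : x ⬝ᵥ (∑ i ∈ s, w i) = ∑ i ∈ s, x ⬝ᵥ w i := by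
  simp only [dotProduct, Finset.sum_apply, Finset.mul_sum]
  exact Finset.sum_comm

private lemma quad_eq_sum {n : Type*} [Fintype n] [DecidableEq n] {A : Matrix n n ℝ}
    (hA : A.IsHermitian) (x : EuclideanSpace ℝ n) :
    x ⬝ᵥ A *ᵥ x = ∑ i, hA.eigenvalues i * (hA.eigenvectorBasis.repr x i) ^ 2 := by
  classical
  set b := hA.eigenvectorBasis with hb
  have hdot : ∀ y z : EuclideanSpace ℝ n, (y ⬝ᵥ (z : n → ℝ)) = (inner ℝ y z : ℝ) := by
    intro y z
    simp [PiLp.inner_apply, RCLike.inner_apply, dotProduct, starRingEnd_apply]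
    exact Finset.sum_congr rfl fun _ _ => mul_comm _ _
  have hx : x = ∑ i, b.repr x i • b i := (b.sum_repr x).symm
  have hAx : A *ᵥ (x : n → ℝ) = ∑ i, (b.repr x i * hA.eigenvalues i) • (b i : n → ℝ) := by
    conv_lhs => rw [hx]
    rw [show ((∑ i, b.repr x i • b i : EuclideanSpace ℝ n) : n → ℝ)
        = ∑ i, b.repr x i • (b i : n → ℝ) by simp, mulVec_sum']
    refine Finset.sum_congr rfl fun i _ => ?_
    show A *ᵥ (b.repr x i • ⇑(b i)) = (b.repr x i * hA.eigenvalues i) • (⇑(b i) : n → ℝ)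
    rw [Matrix.mulVec_smul, hA.mulVec_eigenvectorBasis, smul_smul]
  calc x ⬝ᵥ A *ᵥ x = ∑ i, (b.repr x i * hA.eigenvalues i) * (x ⬝ᵥ (b i : n → ℝ)) := by
        rw [hAx, dotProduct_sum']
        exact Finset.sum_congr rfl fun i _ => by
          rw [show ((b.repr x i * hA.eigenvalues i) • (b i : n → ℝ))
              = (b.repr x i * hA.eigenvalues i) • (b i : n → ℝ) from rfl,
            dotProduct_smul, smul_eq_mul]
    _ = ∑ i, hA.eigenvalues i * (b.repr x i) ^ 2 := by
        refine Finset.sum_congr rfl fun i _ => ?_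
        rw [hdot x (b i), real_inner_comm, ← b.repr_apply_apply]
        ring

private lemma repr_eq_zero_of_mem_span {n : Type*} [Fintype n] [DecidableEq n]
    {A : Matrix n n ℝ} (hA : A.IsHermitian) (P : n → Prop) [DecidablePred P]
    {x : EuclideanSpace ℝ n}
    (hx : x ∈ Submodule.span ℝ (Set.range (fun i : {i // P i} => hA.eigenvectorBasis i)))
    {j : n} (hj : ¬ P j) : hA.eigenvectorBasis.repr x j = 0 := by
  set b := hA.eigenvectorBasis
  have hker : Submodule.span ℝ (Set.range (fun i : {i // P i} => b i))
      ≤ LinearMap.ker ((innerSL ℝ (b j)).toLinearMap) := by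
    rw [Submodule.span_le]
    rintro _ ⟨i, rfl⟩
    simp only [SetLike.mem_coe, LinearMap.mem_ker, ContinuousLinearMap.coe_coe, innerSL_apply_apply]
    exact b.orthonormal.2 (fun h => hj (h ▸ i.2))
  have := hker hx
  simp only [LinearMap.mem_ker, ContinuousLinearMap.coe_coe, innerSL_apply_apply] at this
  rw [b.repr_apply_apply, this]

private lemma finrank_span_eigen {n : Type*} [Fintype n] [DecidableEq n] {A : Matrix n n ℝ}
    (hA : A.IsHermitian) (P : n → Prop) [DecidablePred P] :
    Module.finrank ℝ (Submodule.span ℝ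
      (Set.range (fun i : {i // P i} => hA.eigenvectorBasis i))) = Fintype.card {i // P i} :=
  finrank_span_eq_card ((hA.eigenvectorBasis.orthonormal.comp _
    Subtype.val_injective).linearIndependent)

variable {n : Type*} [Fintype n] [DecidableEq n] {A : Matrix n n ℝ}

private lemma exists_posSubspace (hA : A.IsHermitian) :
    ∃ W : Submodule ℝ (EuclideanSpace ℝ n),
      Module.finrank ℝ W = Fintype.card {i // 0 < hA.eigenvalues i} ∧
      ∀ x ∈ W, x ≠ 0 → 0 < x ⬝ᵥ A *ᵥ x := by
  classical
  refine ⟨Submodule.span ℝ (Set.range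
    (fun i : {i // 0 < hA.eigenvalues i} => hA.eigenvectorBasis i)),
    finrank_span_eigen hA _, fun x hx hx0 => ?_⟩
  rw [quad_eq_sum hA x]
  have hzero : ∀ j, ¬ 0 < hA.eigenvalues j → hA.eigenvectorBasis.repr x j = 0 :=
    fun j hj => repr_eq_zero_of_mem_span hA _ hx hj
  have hex : ∃ j, hA.eigenvectorBasis.repr x j ≠ 0 := by
    by_contra h
    push_neg at h
    exact hx0 (hA.eigenvectorBasis.repr.map_eq_zero_iff.mp (by ext i; exact h i))
  obtain ⟨j, hj⟩ := hex
  have hlj : 0 < hA.eigenvalues j := by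
    by_contra h; exact hj (hzero j h)
  have hnn : ∀ i ∈ Finset.univ, (0:ℝ) ≤ hA.eigenvalues i * hA.eigenvectorBasis.repr x i ^ 2 := by
    intro i _
    by_cases h : 0 < hA.eigenvalues i
    · positivity
    · rw [hzero i h]; simp
  have hj' : (0:ℝ) < hA.eigenvalues j * hA.eigenvectorBasis.repr x j ^ 2 := by positivity
  exact Finset.sum_pos' hnn ⟨j, Finset.mem_univ j, hj'⟩

private lemma posSubspace_le (hA : A.IsHermitian) (W : Submodule ℝ (EuclideanSpace ℝ n))
    (hW : ∀ x ∈ W, x ≠ 0 → 0 < x ⬝ᵥ A *ᵥ x) :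
    Module.finrank ℝ W ≤ Fintype.card {i // 0 < hA.eigenvalues i} := by
  classical
  by_contra hlt
  push_neg at hlt
  set Wn := Submodule.span ℝ (Set.range
    (fun i : {i // ¬ 0 < hA.eigenvalues i} => hA.eigenvectorBasis i)) with hWndef
  have hWn : Module.finrank ℝ Wn
      = Fintype.card n - Fintype.card {i // 0 < hA.eigenvalues i} := by
    rw [finrank_span_eigen hA _, Fintype.card_subtype_compl]
  have hple : Fintype.card {i // 0 < hA.eigenvalues i} ≤ Fintype.card n :=
    Fintype.card_subtype_le _
  have h1 := Submodule.finrank_sup_add_finrank_inf_eq W Wn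
  have h2 : Module.finrank ℝ ↥(W ⊔ Wn) ≤ Fintype.card n :=
    le_trans (Submodule.finrank_le _) (le_of_eq finrank_euclideanSpace)
  have h3 : 0 < Module.finrank ℝ ↥(W ⊓ Wn) := by omega
  have hne : W ⊓ Wn ≠ ⊥ := fun h => by rw [h, finrank_bot] at h3; omega
  obtain ⟨x, hxmem, hx0⟩ := Submodule.exists_mem_ne_zero_of_ne_bot hne
  have hpos := hW x ((inf_le_left : W ⊓ Wn ≤ W) hxmem) hx0
  have hxn : x ∈ Wn := (inf_le_right : W ⊓ Wn ≤ Wn) hxmem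
  have hnonpos : x ⬝ᵥ A *ᵥ x ≤ 0 := by
    rw [quad_eq_sum hA x]
    refine Finset.sum_nonpos (fun i _ => ?_)
    by_cases h : 0 < hA.eigenvalues i
    · rw [repr_eq_zero_of_mem_span hA _ hxn (not_not_intro h)]; simp
    · push_neg at h
      exact mul_nonpos_of_nonpos_of_nonneg h (sq_nonneg _)
  exact absurd hpos (not_lt.mpr hnonpos)

private lemma exists_negSubspace (hA : A.IsHermitian) :
    ∃ W : Submodule ℝ (EuclideanSpace ℝ n),
      Module.finrank ℝ W = Fintype.card {i // hA.eigenvalues i < 0} ∧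
      ∀ x ∈ W, x ≠ 0 → x ⬝ᵥ A *ᵥ x < 0 := by
  classical
  refine ⟨Submodule.span ℝ (Set.range
    (fun i : {i // hA.eigenvalues i < 0} => hA.eigenvectorBasis i)),
    finrank_span_eigen hA _, fun x hx hx0 => ?_⟩
  rw [quad_eq_sum hA x]
  have hzero : ∀ j, ¬ hA.eigenvalues j < 0 → hA.eigenvectorBasis.repr x j = 0 :=
    fun j hj => repr_eq_zero_of_mem_span hA _ hx hj
  have hex : ∃ j, hA.eigenvectorBasis.repr x j ≠ 0 := by
    by_contra h
    push_neg at h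
    exact hx0 (hA.eigenvectorBasis.repr.map_eq_zero_iff.mp (by ext i; exact h i))
  obtain ⟨j, hj⟩ := hex
  have hlj : hA.eigenvalues j < 0 := by
    by_contra h; exact hj (hzero j h)
  have hnn : ∀ i ∈ Finset.univ,
      (0:ℝ) ≤ -(hA.eigenvalues i * hA.eigenvectorBasis.repr x i ^ 2) := by
    intro i _
    by_cases h : hA.eigenvalues i < 0
    · have : (0:ℝ) ≤ hA.eigenvectorBasis.repr x i ^ 2 := sq_nonneg _
      nlinarith
    · rw [hzero i h]; simp
  have hj' : (0:ℝ) < -(hA.eigenvalues j * hA.eigenvectorBasis.repr x j ^ 2) := by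
    have : (0:ℝ) < hA.eigenvectorBasis.repr x j ^ 2 := by positivity
    nlinarith
  have := Finset.sum_pos' hnn ⟨j, Finset.mem_univ j, hj'⟩
  rw [Finset.sum_neg_distrib] at this
  linarith

private lemma negSubspace_le (hA : A.IsHermitian) (W : Submodule ℝ (EuclideanSpace ℝ n))
    (hW : ∀ x ∈ W, x ≠ 0 → x ⬝ᵥ A *ᵥ x < 0) :
    Module.finrank ℝ W ≤ Fintype.card {i // hA.eigenvalues i < 0} := by
  classical
  by_contra hlt
  push_neg at hlt
  set Wn := Submodule.span ℝ (Set.range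
    (fun i : {i // ¬ hA.eigenvalues i < 0} => hA.eigenvectorBasis i)) with hWndef
  have hWn : Module.finrank ℝ Wn
      = Fintype.card n - Fintype.card {i // hA.eigenvalues i < 0} := by
    rw [finrank_span_eigen hA _, Fintype.card_subtype_compl]
  have hple : Fintype.card {i // hA.eigenvalues i < 0} ≤ Fintype.card n :=
    Fintype.card_subtype_le _
  have h1 := Submodule.finrank_sup_add_finrank_inf_eq W Wn
  have h2 : Module.finrank ℝ ↥(W ⊔ Wn) ≤ Fintype.card n :=
    le_trans (Submodule.finrank_le _) (le_of_eq finrank_euclideanSpace)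
  have h3 : 0 < Module.finrank ℝ ↥(W ⊓ Wn) := by omega
  have hne : W ⊓ Wn ≠ ⊥ := fun h => by rw [h, finrank_bot] at h3; omega
  obtain ⟨x, hxmem, hx0⟩ := Submodule.exists_mem_ne_zero_of_ne_bot hne
  have hneg := hW x ((inf_le_left : W ⊓ Wn ≤ W) hxmem) hx0
  have hxn : x ∈ Wn := (inf_le_right : W ⊓ Wn ≤ Wn) hxmem
  have hnonneg : 0 ≤ x ⬝ᵥ A *ᵥ x := by
    rw [quad_eq_sum hA x]
    refine Finset.sum_nonneg (fun i _ => ?_)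
    by_cases h : hA.eigenvalues i < 0
    · rw [repr_eq_zero_of_mem_span hA _ hxn (not_not_intro h)]; simp
    · push_neg at h
      positivity
  exact absurd hneg (not_lt.mpr hnonneg)

private lemma posInertia_le_of_map {m : Type*} [Fintype m] [DecidableEq m]
    {B : Matrix m m ℝ} (hA : A.IsHermitian) (hB : B.IsHermitian)
    (f : EuclideanSpace ℝ n →ₗ[ℝ] EuclideanSpace ℝ m)
    (hker : ∀ x : EuclideanSpace ℝ n, f x = 0 → x ⬝ᵥ A *ᵥ x = 0)
    (hq : ∀ x : EuclideanSpace ℝ n, (f x : m → ℝ) ⬝ᵥ B *ᵥ (f x : m → ℝ) = x ⬝ᵥ A *ᵥ x) :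
    posInertia A ≤ posInertia B := by
  rw [posInertia, dif_pos hA, posInertia, dif_pos hB]
  obtain ⟨W, hdim, hpos⟩ := exists_posSubspace hA
  rw [← hdim]
  have hinj : Function.Injective (f ∘ₗ W.subtype) := by
    rw [← LinearMap.ker_eq_bot, LinearMap.ker_eq_bot']
    intro x hx
    simp only [LinearMap.comp_apply, Submodule.subtype_apply] at hx
    by_contra h0
    have hx0 : (x : EuclideanSpace ℝ n) ≠ 0 := fun h => h0 (Subtype.ext h)
    exact absurd (hker x hx) (ne_of_gt (hpos x x.2 hx0))
  have hrank : Module.finrank ℝ (W.map f) = Module.finrank ℝ W := by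
    have h := LinearMap.finrank_range_of_inj hinj
    rwa [LinearMap.range_comp, Submodule.range_subtype] at h
  rw [← hrank]
  refine posSubspace_le hB (W.map f) ?_
  rintro y ⟨x, hxW, rfl⟩ hy0
  have hx0 : x ≠ 0 := fun h => hy0 (by rw [h, map_zero])
  rw [hq x]; exact hpos x hxW hx0

private lemma negInertia_le_of_map {m : Type*} [Fintype m] [DecidableEq m]
    {B : Matrix m m ℝ} (hA : A.IsHermitian) (hB : B.IsHermitian)
    (f : EuclideanSpace ℝ n →ₗ[ℝ] EuclideanSpace ℝ m)
    (hker : ∀ x : EuclideanSpace ℝ n, f x = 0 → x ⬝ᵥ A *ᵥ x = 0)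
    (hq : ∀ x : EuclideanSpace ℝ n, (f x : m → ℝ) ⬝ᵥ B *ᵥ (f x : m → ℝ) = x ⬝ᵥ A *ᵥ x) :
    negInertia A ≤ negInertia B := by
  rw [negInertia, dif_pos hA, negInertia, dif_pos hB]
  obtain ⟨W, hdim, hneg⟩ := exists_negSubspace hA
  rw [← hdim]
  have hinj : Function.Injective (f ∘ₗ W.subtype) := by
    rw [← LinearMap.ker_eq_bot, LinearMap.ker_eq_bot']
    intro x hx
    simp only [LinearMap.comp_apply, Submodule.subtype_apply] at hx
    by_contra h0
    have hx0 : (x : EuclideanSpace ℝ n) ≠ 0 := fun h => h0 (Subtype.ext h)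
    exact absurd (hker x hx) (ne_of_lt (hneg x x.2 hx0))
  have hrank : Module.finrank ℝ (W.map f) = Module.finrank ℝ W := by
    have h := LinearMap.finrank_range_of_inj hinj
    rwa [LinearMap.range_comp, Submodule.range_subtype] at h
  rw [← hrank]
  refine negSubspace_le hB (W.map f) ?_
  rintro y ⟨x, hxW, rfl⟩ hy0
  have hx0 : x ≠ 0 := fun h => hy0 (by rw [h, map_zero])
  rw [hq x]; exact hneg x hxW hx0

end InertiaAux
section GraphAux

open Matrix

variable {V : Type*} [Fintype V] [DecidableEq V]

private lemma adjMatrix_symm_entry (W : WeightedGraph V) (i j : V) :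
    W.adjMatrix i j = W.adjMatrix j i := by
  classical
  show (if W.G.Adj i j then W.w i j else 0) = (if W.G.Adj j i then W.w j i else 0)
  by_cases h : W.G.Adj i j
  · rw [if_pos h, if_pos h.symm, W.symm]
  · rw [if_neg h, if_neg (fun h' => h h'.symm)]

private lemma adjMatrix_isHermitian (W : WeightedGraph V) : W.adjMatrix.IsHermitian := by
  ext i j
  simp only [Matrix.conjTranspose_apply, star_trivial]
  exact adjMatrix_symm_entry W j i

/-- Extension by zero of a vector on `{x | x ≠ v}` to a vector on `V`. -/
private noncomputable def extZero (v : V) :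
    EuclideanSpace ℝ ↥{x : V | x ≠ v} →ₗ[ℝ] EuclideanSpace ℝ V where
  toFun := fun y => WithLp.toLp 2 (fun x => if h : x ≠ v then y ⟨x, h⟩ else 0)
  map_add' := by
    intro y z; ext x
    by_cases h : x = v
    · simp [h]
    · simp [h, PiLp.add_apply]
  map_smul' := by
    intro r y; ext x
    by_cases h : x = v
    · simp [h]
    · simp [h, PiLp.smul_apply]

private lemma extZero_apply (v : V) (y : EuclideanSpace ℝ ↥{x : V | x ≠ v}) (x : V) :
    extZero v y x = if h : x ≠ v then y ⟨x, h⟩ else 0 := rfl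

/-- The "correction" map: absorb the `v`-coordinate into the `u`-coordinate. -/
private noncomputable def corr (u v : V) (r : ℝ) :
    EuclideanSpace ℝ V →ₗ[ℝ] EuclideanSpace ℝ ↥{x : V | x ≠ v} where
  toFun := fun x => WithLp.toLp 2 (fun t => x (t : V) + (if (t : V) = u then r * x v else 0))
  map_add' := by
    intro x y; ext t
    by_cases h : (t : V) = u <;> simp [h, PiLp.add_apply] <;> ring
  map_smul' := by
    intro c x; ext t
    by_cases h : (t : V) = u <;> simp [h, PiLp.smul_apply] <;> ring

private lemma corr_apply (u v : V) (r : ℝ) (x : EuclideanSpace ℝ V) (t : ↥{x : V | x ≠ v}) :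
    corr u v r x t = x (t : V) + (if (t : V) = u then r * x v else 0) := rfl

private lemma pendant_key (W : WeightedGraph V) (u v c : V) (huv : u ≠ v)
    (hu : W.G.neighborSet u = {c}) (hv : W.G.neighborSet v = {c}) :
    W.iPos = (W.induce {x : V | x ≠ v}).iPos ∧ W.iNeg = (W.induce {x : V | x ≠ v}).iNeg := by
  classical
  set M := W.adjMatrix with hMdef
  set M' := (W.induce {x : V | x ≠ v}).adjMatrix with hM'def
  have adjU : ∀ x, W.G.Adj u x ↔ x = c := fun x => by
    rw [← SimpleGraph.mem_neighborSet, hu, Set.mem_singleton_iff]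
  have adjV : ∀ x, W.G.Adj v x ↔ x = c := fun x => by
    rw [← SimpleGraph.mem_neighborSet, hv, Set.mem_singleton_iff]
  have hadj_uc : W.G.Adj u c := (adjU c).mpr rfl
  have hadj_vc : W.G.Adj v c := (adjV c).mpr rfl
  have huc : u ≠ c := hadj_uc.ne
  have hvc : v ≠ c := hadj_vc.ne
  set a := W.w u c with hadef
  set b := W.w v c with hbdef
  have ha : 0 < a := W.pos u c hadj_uc
  have hb : 0 < b := W.pos v c hadj_vc
  have hM : ∀ i j, M i j = M j i := fun i j => adjMatrix_symm_entry W i j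
  have dotdef : ∀ x y : V → ℝ, x ⬝ᵥ y = ∑ p, x p * y p := fun _ _ => rfl
  have mulVecdef : ∀ (y : V → ℝ) (p : V), (M *ᵥ y) p = ∑ q, M p q * y q := fun _ _ => rfl
  have rowU : ∀ x, M u x = if x = c then a else 0 := by
    intro x
    show (if W.G.Adj u x then W.w u x else 0) = _
    by_cases hx : x = c
    · subst hx; rw [if_pos hadj_uc, if_pos rfl]
    · rw [if_neg (fun h => hx ((adjU x).mp h)), if_neg hx]
  have rowV : ∀ x, M v x = if x = c then b else 0 := by
    intro x
    show (if W.G.Adj v x then W.w v x else 0) = _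
    by_cases hx : x = c
    · subst hx; rw [if_pos hadj_vc, if_pos rfl]
    · rw [if_neg (fun h => hx ((adjV x).mp h)), if_neg hx]
  have colU : ∀ p, M p u = if p = c then a else 0 := fun p => (hM p u).trans (rowU p)
  have colV : ∀ p, M p v = if p = c then b else 0 := fun p => (hM p v).trans (rowV p)
  have L1 : ∀ y : V → ℝ, (M *ᵥ y) u = a * y c := by
    intro y
    show ∑ q, M u q * y q = a * y c
    rw [Finset.sum_eq_single c (fun q _ hq => by rw [rowU q, if_neg hq, zero_mul])
      (fun h => absurd (Finset.mem_univ c) h)]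
    rw [rowU c, if_pos rfl]
  have L2 : ∀ y : V → ℝ, (M *ᵥ y) v = b * y c := by
    intro y
    show ∑ q, M v q * y q = b * y c
    rw [Finset.sum_eq_single c (fun q _ hq => by rw [rowV q, if_neg hq, zero_mul])
      (fun h => absurd (Finset.mem_univ c) h)]
    rw [rowV c, if_pos rfl]
  have Bue : ∀ y : V → ℝ, Pi.single u (1:ℝ) ⬝ᵥ (M *ᵥ y) = a * y c := by
    intro y
    rw [dotdef]
    rw [Finset.sum_eq_single u (fun p _ hp => by rw [Pi.single_eq_of_ne hp, zero_mul])
      (fun h => absurd (Finset.mem_univ u) h)]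
    rw [Pi.single_eq_same, one_mul, L1]
  have Bve : ∀ y : V → ℝ, Pi.single v (1:ℝ) ⬝ᵥ (M *ᵥ y) = b * y c := by
    intro y
    rw [dotdef]
    rw [Finset.sum_eq_single v (fun p _ hp => by rw [Pi.single_eq_of_ne hp, zero_mul])
      (fun h => absurd (Finset.mem_univ v) h)]
    rw [Pi.single_eq_same, one_mul, L2]
  have MeU : M *ᵥ Pi.single u (1:ℝ) = fun p => if p = c then a else 0 := by
    funext p
    rw [mulVecdef]
    rw [Finset.sum_eq_single u (fun q _ hq => by rw [Pi.single_eq_of_ne hq, mul_zero])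
      (fun h => absurd (Finset.mem_univ u) h)]
    rw [Pi.single_eq_same, mul_one, colU]
  have MeV : M *ᵥ Pi.single v (1:ℝ) = fun p => if p = c then b else 0 := by
    funext p
    rw [mulVecdef]
    rw [Finset.sum_eq_single v (fun q _ hq => by rw [Pi.single_eq_of_ne hq, mul_zero])
      (fun h => absurd (Finset.mem_univ v) h)]
    rw [Pi.single_eq_same, mul_one, colV]
  have Beu : ∀ y : V → ℝ, y ⬝ᵥ (M *ᵥ Pi.single u (1:ℝ)) = a * y c := by
    intro y
    rw [MeU, dotdef]
    rw [Finset.sum_eq_single c (fun p _ hp => by rw [if_neg hp, mul_zero])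
      (fun h => absurd (Finset.mem_univ c) h)]
    rw [if_pos rfl, mul_comm]
  have Bev : ∀ y : V → ℝ, y ⬝ᵥ (M *ᵥ Pi.single v (1:ℝ)) = b * y c := by
    intro y
    rw [MeV, dotdef]
    rw [Finset.sum_eq_single c (fun p _ hp => by rw [if_neg hp, mul_zero])
      (fun h => absurd (Finset.mem_univ c) h)]
    rw [if_pos rfl, mul_comm]
  have hcu : (Pi.single u (1:ℝ) : V → ℝ) c = 0 := Pi.single_eq_of_ne (Ne.symm huc) 1
  have hcv : (Pi.single v (1:ℝ) : V → ℝ) c = 0 := Pi.single_eq_of_ne (Ne.symm hvc) 1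
  have quadd : ∀ (x0 : V → ℝ) (α β : ℝ),
      (x0 + α • (Pi.single u (1:ℝ) : V → ℝ) + β • (Pi.single v (1:ℝ) : V → ℝ)) ⬝ᵥ
        M *ᵥ (x0 + α • (Pi.single u (1:ℝ) : V → ℝ) + β • (Pi.single v (1:ℝ) : V → ℝ))
      = x0 ⬝ᵥ M *ᵥ x0 + 2*a*α*(x0 c) + 2*b*β*(x0 c) := by
    intro x0 α β
    simp only [Matrix.mulVec_add, Matrix.mulVec_smul, dotProduct_add,
      add_dotProduct, dotProduct_smul, smul_dotProduct, smul_eq_mul,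
      Beu, Bev, Bue, Bve, Pi.add_apply, Pi.smul_apply, hcu, hcv,
      mul_zero, add_zero, zero_add]
    ring
  set X0 : (V → ℝ) → (V → ℝ) :=
    (fun x p => if p = u then 0 else if p = v then 0 else x p) with hX0def
  have hdecomp : ∀ x : V → ℝ,
      x = X0 x + x u • (Pi.single u (1:ℝ) : V → ℝ) + x v • (Pi.single v (1:ℝ) : V → ℝ) := by
    intro x; funext p
    simp only [hX0def, Pi.add_apply, Pi.smul_apply, smul_eq_mul, Pi.single_apply]
    by_cases hp : p = u
    · subst hp; simp [huv]
    · by_cases hq : p = v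
      · subst hq; simp [hp]
      · simp [hp, hq]
  have hX0c : ∀ x : V → ℝ, X0 x c = x c := by
    intro x
    simp [hX0def, Ne.symm huc, Ne.symm hvc]
  have qx_formula : ∀ x : V → ℝ, x ⬝ᵥ M *ᵥ x
      = (X0 x) ⬝ᵥ M *ᵥ (X0 x) + 2*a*(x u)*(x c) + 2*b*(x v)*(x c) := by
    intro x
    conv_lhs => rw [hdecomp x]
    rw [quadd (X0 x) (x u) (x v), hX0c]
  -- adjacency matrix of induced graph agrees with M
  have hM'eq : ∀ t t' : ↥{x : V | x ≠ v}, M' t t' = M (t : V) (t' : V) := by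
    intro t t'
    show (if (W.induce {x : V | x ≠ v}).G.Adj t t' then W.w t t' else 0)
       = (if W.G.Adj (t : V) (t' : V) then W.w (t : V) (t' : V) else 0)
    have hiff : (W.induce {x : V | x ≠ v}).G.Adj t t' ↔ W.G.Adj (t : V) (t' : V) := Iff.rfl
    by_cases h : W.G.Adj (t : V) (t' : V)
    · rw [if_pos (hiff.mpr h), if_pos h]
    · rw [if_neg (fun h' => h (hiff.mp h')), if_neg h]
  have sumdrop : ∀ F : V → ℝ, F v = 0 → ∑ p, F p = ∑ t : ↥{x : V | x ≠ v}, F (t : V) := by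
    intro F hF
    rw [← Finset.sum_erase Finset.univ hF]
    exact Finset.sum_subtype _ (fun x => by simp [Finset.mem_erase]) F
  have gy0 : ∀ y, extZero v y v = 0 := fun y => dif_neg (not_not_intro rfl)
  have gyt : ∀ y (t : ↥{x : V | x ≠ v}), extZero v y (t : V) = y t :=
    fun y t => dif_pos t.2
  have I1 : ∀ y : EuclideanSpace ℝ ↥{x : V | x ≠ v},
      (extZero v y : V → ℝ) ⬝ᵥ M *ᵥ (extZero v y : V → ℝ) = y ⬝ᵥ M' *ᵥ y := by
    intro y
    show ∑ p, (extZero v y : V → ℝ) p * (M *ᵥ (extZero v y : V → ℝ)) p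
        = ∑ t, y t * (M' *ᵥ (y : ↥{x : V | x ≠ v} → ℝ)) t
    rw [sumdrop _ (by rw [gy0, zero_mul])]
    refine Finset.sum_congr rfl fun t _ => ?_
    rw [gyt]
    congr 1
    show ∑ q, M (t : V) q * (extZero v y : V → ℝ) q
        = ∑ q : ↥{x : V | x ≠ v}, M' t q * y q
    rw [sumdrop _ (by rw [gy0, mul_zero])]
    exact Finset.sum_congr rfl fun q _ => by rw [gyt, hM'eq]
  have gker : ∀ y : EuclideanSpace ℝ ↥{x : V | x ≠ v},
      extZero v y = 0 → y ⬝ᵥ M' *ᵥ y = 0 := by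
    intro y hy
    have hy0 : y = 0 := by
      ext t
      have h1 := congrArg (fun z : EuclideanSpace ℝ V => z (t : V)) hy
      simp only at h1
      rw [gyt] at h1
      simpa using h1
    rw [hy0]
    show (0 : ↥{x : V | x ≠ v} → ℝ) ⬝ᵥ M' *ᵥ (0 : ↥{x : V | x ≠ v} → ℝ) = 0
    simp
  -- the correction map
  have qz_eq : ∀ x : EuclideanSpace ℝ V,
      (extZero v (corr u v (b/a) x) : V → ℝ) ⬝ᵥ M *ᵥ (extZero v (corr u v (b/a) x) : V → ℝ)
        = x ⬝ᵥ M *ᵥ x := by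
    intro x
    have hz : (extZero v (corr u v (b/a) x) : V → ℝ)
        = X0 x + (x u + (b/a) * x v) • (Pi.single u (1:ℝ) : V → ℝ) + (0:ℝ) • (Pi.single v (1:ℝ) : V → ℝ) := by
      funext p
      simp only [hX0def, Pi.add_apply, Pi.smul_apply, smul_eq_mul, Pi.single_apply,
        zero_mul, add_zero, extZero_apply]
      by_cases hp : p = v
      · subst hp
        rw [dif_neg (not_not_intro rfl)]
        simp [Ne.symm huv, huv]
      · rw [dif_pos hp, corr_apply]
        by_cases hq : p = u
        · subst hq; simp
        · simp [hp, hq]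
    rw [hz, quadd, qx_formula x, hX0c]
    field_simp
    ring
  have hqF : ∀ x : EuclideanSpace ℝ V,
      (corr u v (b/a) x : ↥{x : V | x ≠ v} → ℝ) ⬝ᵥ M' *ᵥ (corr u v (b/a) x : ↥{x : V | x ≠ v} → ℝ)
        = x ⬝ᵥ M *ᵥ x :=
    fun x => (I1 (corr u v (b/a) x)).symm.trans (qz_eq x)
  have hkerF : ∀ x : EuclideanSpace ℝ V, corr u v (b/a) x = 0 → x ⬝ᵥ M *ᵥ x = 0 := by
    intro x hx0
    have hxp : ∀ p : V, p ≠ v → p ≠ u → x p = 0 := by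
      intro p hpv hpu
      have h1 := congrArg (fun z : EuclideanSpace ℝ ↥{x : V | x ≠ v} => z ⟨p, hpv⟩) hx0
      simp only at h1
      rw [corr_apply] at h1
      simpa [hpu] using h1
    have hxc : x c = 0 := hxp c (Ne.symm hvc) (Ne.symm huc)
    have hX0x : X0 x = 0 := by
      funext p
      by_cases hp : p = u
      · simp [hX0def, hp]
      · by_cases hq : p = v
        · simp [hX0def, hp, hq]
        · simp [hX0def, hp, hq, hxp p hq hp]
    rw [qx_formula x, hX0x, hxc]
    simp
  have MH : M.IsHermitian := adjMatrix_isHermitian W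
  have M'H : M'.IsHermitian := adjMatrix_isHermitian _
  constructor
  · exact le_antisymm
      (posInertia_le_of_map MH M'H (corr u v (b/a)) hkerF hqF)
      (posInertia_le_of_map M'H MH (extZero v) gker I1)
  · exact le_antisymm
      (negInertia_le_of_map MH M'H (corr u v (b/a)) hkerF hqF)
      (negInertia_le_of_map M'H MH (extZero v) gker I1)

end GraphAux
/-- deleting one vertex of a pendant twin does not change the
positive and negative inertia indices. -/
theorem stmt18 {V : Type*} [Fintype V] [DecidableEq V] (W : WeightedGraph V)
    (u v c : V) (huv : u ≠ v)
    (hu : W.G.neighborSet u = {c}) (hv : W.G.neighborSet v = {c}) :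
    W.iPos = (W.induce {x : V | x ≠ v}).iPos ∧
    W.iPos = (W.induce {x : V | x ≠ u}).iPos ∧
    W.iNeg = (W.induce {x : V | x ≠ v}).iNeg ∧
    W.iNeg = (W.induce {x : V | x ≠ u}).iNeg := by
  obtain ⟨h1, h3⟩ := pendant_key W u v c huv hu hv
  obtain ⟨h2, h4⟩ := pendant_key W v u c huv.symm hv hu
  exact ⟨h1, h2, h3, h4⟩
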